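/- For k = 2, each of the five Wronskians of the ordered family [x^{3k-2}, 1, x^k, (1+x^{2k-2})(x + k x^{2k-1}), (1+x^{2k-2})(x + k x^{2k-1}) arctan(x^{k-1})], i.e. of [x^4, 1, x^2, (1+x^2)(x+2x^3), (1+x^2)(x+2x^3) arctan x], is nonvanishing on (0, ∞); in particular W4(x) = 1536 x^3 (2x^2 + 9)/(x^2+1)^3 > 0 for x > 0. -/

import Mathlib

open Real

/-- The family `[x^4, 1, x^2, (1+x^2)(x+2x^3), (1+x^2)(x+2x^3) arctan x]`. -/
noncomputable def fam18 : Fin 5 → ℝ → ℝ :=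
  ![fun x => x ^ 4,
    fun _ => 1,
    fun x => x ^ 2,
    fun x => (1 + x ^ 2) * (x + 2 * x ^ 3),
    fun x => (1 + x ^ 2) * (x + 2 * x ^ 3) * arctan x]

/-- The Wronskian of the first `i+1` functions of the family at `x`. -/
noncomputable def wronskian18 (i : Fin 5) (x : ℝ) : ℝ :=
  Matrix.det (fun j l : Fin (i.val + 1) => deriv^[j.val] (fam18 (Fin.castLE i.isLt l)) x)

/-! ### Auxiliary functions -/

def pp (a b c d e f : ℝ) : ℝ → ℝ := fun x => a + b*x + c*x^2 + d*x^3 + e*x^4 + f*x^5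

noncomputable def iv (k : ℕ) : ℝ → ℝ := fun x => ((1+x^2)^k)⁻¹

noncomputable def G1 : ℝ → ℝ := fun x => pp 1 0 9 0 10 0 x * arctan x + pp 0 1 0 2 0 0 x
noncomputable def G2 : ℝ → ℝ := fun x =>
  pp 0 18 0 40 0 0 x * arctan x + pp 0 0 16 0 0 0 x + pp 2 0 0 0 0 0 x * iv 1 x
noncomputable def G3 : ℝ → ℝ := fun x =>
  pp 18 0 120 0 0 0 x * arctan x + pp 0 72 0 0 0 0 x + pp 0 (-22) 0 0 0 0 x * iv 1 x
    + pp 0 (-4) 0 0 0 0 x * iv 2 x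
noncomputable def G4 : ℝ → ℝ := fun x =>
  pp 0 240 0 0 0 0 x * arctan x + pp 192 0 0 0 0 0 x + pp (-124) 0 0 0 0 0 x * iv 1 x
    + pp (-4) 0 44 0 0 0 x * iv 2 x + pp 0 0 16 0 0 0 x * iv 3 x

/-! ### HasDerivAt lemmas -/

lemma hpp (a b c d e f x : ℝ) :
    HasDerivAt (pp a b c d e f) (pp b (2*c) (3*d) (4*e) (5*f) 0 x) x := by
  have h := (((((hasDerivAt_const x a).add ((hasDerivAt_id x).const_mul b)).add
      ((hasDerivAt_pow 2 x).const_mul c)).add ((hasDerivAt_pow 3 x).const_mul d)).add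
      ((hasDerivAt_pow 4 x).const_mul e)).add ((hasDerivAt_pow 5 x).const_mul f)
  unfold pp
  convert h using 1
  all_goals try rfl
  try push_cast
  try ring

lemma h1sq (x : ℝ) : HasDerivAt (fun y : ℝ => 1 + y^2) (2*x) x := by
  have h := (hasDerivAt_pow 2 x).const_add 1
  convert h using 1
  all_goals try rfl
  try push_cast
  try ring

lemma hiv1 (x : ℝ) : HasDerivAt (iv 1) ((-2)*x * iv 2 x) x := by
  have hne : ((1:ℝ)+x^2)^1 ≠ 0 := by positivity
  have h := ((h1sq x).pow 1).inv hne
  unfold iv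
  have h0 : (1:ℝ)+x^2 ≠ 0 := by positivity
  convert h using 1
  all_goals try rfl
  simp only [Pi.pow_apply]
  try field_simp
  try ring

lemma hiv2 (x : ℝ) : HasDerivAt (iv 2) ((-4)*x * iv 3 x) x := by
  have hne : ((1:ℝ)+x^2)^2 ≠ 0 := by positivity
  have h := ((h1sq x).pow 2).inv hne
  unfold iv
  have h0 : (1:ℝ)+x^2 ≠ 0 := by positivity
  convert h using 1
  all_goals try rfl
  simp only [Pi.pow_apply]
  try field_simp
  try ring

lemma hq (x : ℝ) : HasDerivAt (fun y : ℝ => (1 + y ^ 2) * (y + 2 * y ^ 3))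
    (pp 1 0 9 0 10 0 x) x := by
  have h2 : HasDerivAt (fun y : ℝ => y + 2 * y ^ 3) (1 + 2*(3*x^2)) x := by
    have h := (hasDerivAt_id x).add ((hasDerivAt_pow 3 x).const_mul 2)
    convert h using 1
    all_goals try rfl
    try push_cast
    try ring
  have h := (h1sq x).mul h2
  convert h using 1
  all_goals try rfl
  unfold pp
  ring

/-! ### derivative chains (function level) -/

lemma dpp (a b c d e f : ℝ) :
    deriv (pp a b c d e f) = pp b (2*c) (3*d) (4*e) (5*f) 0 :=
  funext fun x => (hpp a b c d e f x).deriv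

lemma iter_step {f g h : ℝ → ℝ} (n : ℕ) (h1 : deriv^[n] f = g) (h2 : deriv g = h) :
    deriv^[n+1] f = h := by
  rw [Function.iterate_succ_apply', h1, h2]

lemma ppe {a b c d e f a' b' c' d' e' f' : ℝ} (h : a = a' ∧ b = b' ∧ c = c' ∧ d = d' ∧ e = e' ∧ f = f') :
    pp a b c d e f = pp a' b' c' d' e' f' := by
  obtain ⟨h1,h2,h3,h4,h5,h6⟩ := h
  rw [h1,h2,h3,h4,h5,h6]

-- column 0 : x^4
lemma c01 : deriv^[1] (fun x : ℝ => x^4) = pp 0 0 0 4 0 0 := by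
  rw [Function.iterate_one]
  funext x
  have H : HasDerivAt (fun x : ℝ => x^4) (pp 0 0 0 4 0 0 x) x := by
    convert hasDerivAt_pow 4 x using 1
    all_goals try rfl
    unfold pp
    push_cast
    ring
  exact H.deriv

lemma c02 : deriv^[2] (fun x : ℝ => x^4) = pp 0 0 12 0 0 0 :=
  iter_step 1 c01 (by rw [dpp]; exact ppe (by norm_num))

lemma c03 : deriv^[3] (fun x : ℝ => x^4) = pp 0 24 0 0 0 0 :=
  iter_step 2 c02 (by rw [dpp]; exact ppe (by norm_num))

lemma c04 : deriv^[4] (fun x : ℝ => x^4) = pp 24 0 0 0 0 0 :=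
  iter_step 3 c03 (by rw [dpp]; exact ppe (by norm_num))

-- column 1 : constant 1
lemma c11 : deriv^[1] (fun _ : ℝ => (1:ℝ)) = fun _ => (0:ℝ) := by
  rw [Function.iterate_one]; funext x; simp

lemma dzero : deriv (fun _ : ℝ => (0:ℝ)) = fun _ => (0:ℝ) := by
  funext x; simp

lemma c12 : deriv^[2] (fun _ : ℝ => (1:ℝ)) = fun _ => (0:ℝ) := iter_step 1 c11 dzero
lemma c13 : deriv^[3] (fun _ : ℝ => (1:ℝ)) = fun _ => (0:ℝ) := iter_step 2 c12 dzero
lemma c14 : deriv^[4] (fun _ : ℝ => (1:ℝ)) = fun _ => (0:ℝ) := iter_step 3 c13 dzero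

-- column 2 : x^2
lemma c21 : deriv^[1] (fun x : ℝ => x^2) = pp 0 2 0 0 0 0 := by
  rw [Function.iterate_one]
  funext x
  have H : HasDerivAt (fun x : ℝ => x^2) (pp 0 2 0 0 0 0 x) x := by
    convert hasDerivAt_pow 2 x using 1
    all_goals try rfl
    unfold pp
    push_cast
    ring
  exact H.deriv

lemma c22 : deriv^[2] (fun x : ℝ => x^2) = pp 2 0 0 0 0 0 :=
  iter_step 1 c21 (by rw [dpp]; exact ppe (by norm_num))

lemma c23 : deriv^[3] (fun x : ℝ => x^2) = pp 0 0 0 0 0 0 :=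
  iter_step 2 c22 (by rw [dpp]; exact ppe (by norm_num))

lemma c24 : deriv^[4] (fun x : ℝ => x^2) = pp 0 0 0 0 0 0 :=
  iter_step 3 c23 (by rw [dpp]; exact ppe (by norm_num))

-- column 3 : q = (1+x^2)(x+2x^3)
lemma c31 : deriv^[1] (fun x : ℝ => (1 + x ^ 2) * (x + 2 * x ^ 3)) = pp 1 0 9 0 10 0 := by
  rw [Function.iterate_one]
  funext x
  exact (hq x).deriv

lemma c32 : deriv^[2] (fun x : ℝ => (1 + x ^ 2) * (x + 2 * x ^ 3)) = pp 0 18 0 40 0 0 :=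
  iter_step 1 c31 (by rw [dpp]; exact ppe (by norm_num))

lemma c33 : deriv^[3] (fun x : ℝ => (1 + x ^ 2) * (x + 2 * x ^ 3)) = pp 18 0 120 0 0 0 :=
  iter_step 2 c32 (by rw [dpp]; exact ppe (by norm_num))

lemma c34 : deriv^[4] (fun x : ℝ => (1 + x ^ 2) * (x + 2 * x ^ 3)) = pp 0 240 0 0 0 0 :=
  iter_step 3 c33 (by rw [dpp]; exact ppe (by norm_num))

-- column 4 : q * arctan
lemma c41 : deriv^[1] (fun x : ℝ => (1 + x ^ 2) * (x + 2 * x ^ 3) * arctan x) = G1 := by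
  rw [Function.iterate_one]
  funext x
  have H : HasDerivAt (fun x : ℝ => (1 + x ^ 2) * (x + 2 * x ^ 3) * arctan x) (G1 x) x := by
    have h := (hq x).mul (hasDerivAt_arctan x)
    have h0 : (1:ℝ)+x^2 ≠ 0 := by positivity
    convert h using 1
    all_goals try rfl
    unfold G1 pp
    try field_simp
    try ring
  exact H.deriv

lemma dG1 : deriv G1 = G2 := by
  funext x
  have H : HasDerivAt G1 (G2 x) x := by
    have h := ((hpp 1 0 9 0 10 0 x).mul (hasDerivAt_arctan x)).add (hpp 0 1 0 2 0 0 x)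
    unfold G1 G2
    convert h using 1
    all_goals try rfl
    have h0 : (1:ℝ)+x^2 ≠ 0 := by positivity
    unfold pp iv
    try field_simp
    try ring
  exact H.deriv

lemma dG2 : deriv G2 = G3 := by
  funext x
  have H : HasDerivAt G2 (G3 x) x := by
    have h := (((hpp 0 18 0 40 0 0 x).mul (hasDerivAt_arctan x)).add
      (hpp 0 0 16 0 0 0 x)).add ((hpp 2 0 0 0 0 0 x).mul (hiv1 x))
    unfold G2 G3
    convert h using 1
    all_goals try rfl
    have h0 : (1:ℝ)+x^2 ≠ 0 := by positivity
    unfold pp iv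
    try field_simp
    try ring
  exact H.deriv

lemma dG3 : deriv G3 = G4 := by
  funext x
  have H : HasDerivAt G3 (G4 x) x := by
    have h := ((((hpp 18 0 120 0 0 0 x).mul (hasDerivAt_arctan x)).add
      (hpp 0 72 0 0 0 0 x)).add ((hpp 0 (-22) 0 0 0 0 x).mul (hiv1 x))).add
      ((hpp 0 (-4) 0 0 0 0 x).mul (hiv2 x))
    unfold G3 G4
    convert h using 1
    all_goals try rfl
    have h0 : (1:ℝ)+x^2 ≠ 0 := by positivity
    unfold pp iv
    try field_simp
    try ring
  exact H.deriv

lemma c42 : deriv^[2] (fun x : ℝ => (1 + x ^ 2) * (x + 2 * x ^ 3) * arctan x) = G2 :=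
  iter_step 1 c41 dG1
lemma c43 : deriv^[3] (fun x : ℝ => (1 + x ^ 2) * (x + 2 * x ^ 3) * arctan x) = G3 :=
  iter_step 2 c42 dG2
lemma c44 : deriv^[4] (fun x : ℝ => (1 + x ^ 2) * (x + 2 * x ^ 3) * arctan x) = G4 :=
  iter_step 3 c43 dG3

lemma det_fin_four (A : Matrix (Fin 4) (Fin 4) ℝ) : A.det = A 0 0*A 1 1*A 2 2*A 3 3 - A 0 0*A 1 1*A 2 3*A 3 2 - A 0 0*A 1 2*A 2 1*A 3 3 + A 0 0*A 1 2*A 2 3*A 3 1 + A 0 0*A 1 3*A 2 1*A 3 2 - A 0 0*A 1 3*A 2 2*A 3 1 - A 0 1*A 1 0*A 2 2*A 3 3 + A 0 1*A 1 0*A 2 3*A 3 2 + A 0 1*A 1 2*A 2 0*A 3 3 - A 0 1*A 1 2*A 2 3*A 3 0 - A 0 1*A 1 3*A 2 0*A 3 2 + A 0 1*A 1 3*A 2 2*A 3 0 + A 0 2*A 1 0*A 2 1*A 3 3 - A 0 2*A 1 0*A 2 3*A 3 1 - A 0 2*A 1 1*A 2 0*A 3 3 + A 0 2*A 1 1*A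 2 3*A 3 0 + A 0 2*A 1 3*A 2 0*A 3 1 - A 0 2*A 1 3*A 2 1*A 3 0 - A 0 3*A 1 0*A 2 1*A 3 2 + A 0 3*A 1 0*A 2 2*A 3 1 + A 0 3*A 1 1*A 2 0*A 3 2 - A 0 3*A 1 1*A 2 2*A 3 0 - A 0 3*A 1 2*A 2 0*A 3 1 + A 0 3*A 1 2*A 2 1*A 3 0 := by
  rw [Matrix.det_succ_row_zero]
  simp [Fin.sum_univ_succ, Matrix.det_fin_three, Matrix.submatrix_apply, Fin.zero_succAbove,
    Fin.succ_succAbove_zero, Fin.succ_succAbove_one, show Fin.succ (2:Fin 3) = 3 by decide, show Fin.castSucc (2:Fin 3) = 2 by decide, show Fin.succAbove (1:Fin 4) (0:Fin 3) = 0 by decide, show Fin.succAbove (1:Fin 4) (1:Fin 3) = 2 by decide, show Fin.succAbove (1:Fin 4) (2:Fin 3) = 3 by decide, show Fin.succAbove (2:Fin 4) (0:Fin 3) = 0 by decide, show Fin.succAbove (2:Fin 4) (1:Fin 3) = 1 by decide, show Fin.succAbove (2:Fin 4) (2:Fin 3) = 3 by decide, show Fin.succAbove (3:Fin 4) (0:Fin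 3) = 0 by decide, show Fin.succAbove (3:Fin 4) (1:Fin 3) = 1 by decide, show Fin.succAbove (3:Fin 4) (2:Fin 3) = 2 by decide]
  ring

set_option maxHeartbeats 1600000 in
lemma det_fin_five (A : Matrix (Fin 5) (Fin 5) ℝ) : A.det = A 0 0*A 1 1*A 2 2*A 3 3*A 4 4 - A 0 0*A 1 1*A 2 2*A 3 4*A 4 3 - A 0 0*A 1 1*A 2 3*A 3 2*A 4 4 + A 0 0*A 1 1*A 2 3*A 3 4*A 4 2 + A 0 0*A 1 1*A 2 4*A 3 2*A 4 3 - A 0 0*A 1 1*A 2 4*A 3 3*A 4 2 - A 0 0*A 1 2*A 2 1*A 3 3*A 4 4 + A 0 0*A 1 2*A 2 1*A 3 4*A 4 3 + A 0 0*A 1 2*A 2 3*A 3 1*A 4 4 - A 0 0*A 1 2*A 2 3*A 3 4*A 4 1 - A 0 0*A 1 2*A 2 4*A 3 1*A 4 3 + A 0 0*A 1 2*A 2 4*A 3 3*A 4 1 + A 0 0*A 1 3*A 2 1*A 3 2*A 4 4 - A 0 0*A 1 3*A 2 1*A 3 4*A 4 2 - A 0 0*A 1 3*A 2 2*A 3 1*A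 4 4 + A 0 0*A 1 3*A 2 2*A 3 4*A 4 1 + A 0 0*A 1 3*A 2 4*A 3 1*A 4 2 - A 0 0*A 1 3*A 2 4*A 3 2*A 4 1 - A 0 0*A 1 4*A 2 1*A 3 2*A 4 3 + A 0 0*A 1 4*A 2 1*A 3 3*A 4 2 + A 0 0*A 1 4*A 2 2*A 3 1*A 4 3 - A 0 0*A 1 4*A 2 2*A 3 3*A 4 1 - A 0 0*A 1 4*A 2 3*A 3 1*A 4 2 + A 0 0*A 1 4*A 2 3*A 3 2*A 4 1 - A 0 1*A 1 0*A 2 2*A 3 3*A 4 4 + A 0 1*A 1 0*A 2 2*A 3 4*A 4 3 + A 0 1*A 1 0*A 2 3*A 3 2*A 4 4 - A 0 1*A 1 0*A 2 3*A 3 4*A 4 2 - A 0 1*A 1 0*A 2 4*A 3 2*A 4 3 + A 0 1*A 1 0*A 2 4*A 3 3*A 4 2 + A 0 1*A 1 2*A 2 0*A 3 3*A 4 4 - A 0 1*A 1 2*A 2 0*A 3 4*A 4 3 - A 0 1*A 1 2*A 2 3*A 3 0*A 4 4 + A 0 1*A 1 2*A 2 3*A 3 4*A 4 0 + A 0 1*A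 1 2*A 2 4*A 3 0*A 4 3 - A 0 1*A 1 2*A 2 4*A 3 3*A 4 0 - A 0 1*A 1 3*A 2 0*A 3 2*A 4 4 + A 0 1*A 1 3*A 2 0*A 3 4*A 4 2 + A 0 1*A 1 3*A 2 2*A 3 0*A 4 4 - A 0 1*A 1 3*A 2 2*A 3 4*A 4 0 - A 0 1*A 1 3*A 2 4*A 3 0*A 4 2 + A 0 1*A 1 3*A 2 4*A 3 2*A 4 0 + A 0 1*A 1 4*A 2 0*A 3 2*A 4 3 - A 0 1*A 1 4*A 2 0*A 3 3*A 4 2 - A 0 1*A 1 4*A 2 2*A 3 0*A 4 3 + A 0 1*A 1 4*A 2 2*A 3 3*A 4 0 + A 0 1*A 1 4*A 2 3*A 3 0*A 4 2 - A 0 1*A 1 4*A 2 3*A 3 2*A 4 0 + A 0 2*A 1 0*A 2 1*A 3 3*A 4 4 - A 0 2*A 1 0*A 2 1*A 3 4*A 4 3 - A 0 2*A 1 0*A 2 3*A 3 1*A 4 4 + A 0 2*A 1 0*A 2 3*A 3 4*A 4 1 + A 0 2*A 1 0*A 2 4*A 3 1*A 4 3 - A 0 2*A 1 0*A 2 4*A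 3 3*A 4 1 - A 0 2*A 1 1*A 2 0*A 3 3*A 4 4 + A 0 2*A 1 1*A 2 0*A 3 4*A 4 3 + A 0 2*A 1 1*A 2 3*A 3 0*A 4 4 - A 0 2*A 1 1*A 2 3*A 3 4*A 4 0 - A 0 2*A 1 1*A 2 4*A 3 0*A 4 3 + A 0 2*A 1 1*A 2 4*A 3 3*A 4 0 + A 0 2*A 1 3*A 2 0*A 3 1*A 4 4 - A 0 2*A 1 3*A 2 0*A 3 4*A 4 1 - A 0 2*A 1 3*A 2 1*A 3 0*A 4 4 + A 0 2*A 1 3*A 2 1*A 3 4*A 4 0 + A 0 2*A 1 3*A 2 4*A 3 0*A 4 1 - A 0 2*A 1 3*A 2 4*A 3 1*A 4 0 - A 0 2*A 1 4*A 2 0*A 3 1*A 4 3 + A 0 2*A 1 4*A 2 0*A 3 3*A 4 1 + A 0 2*A 1 4*A 2 1*A 3 0*A 4 3 - A 0 2*A 1 4*A 2 1*A 3 3*A 4 0 - A 0 2*A 1 4*A 2 3*A 3 0*A 4 1 + A 0 2*A 1 4*A 2 3*A 3 1*A 4 0 - A 0 3*A 1 0*A 2 1*A 3 2*A 4 4 +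 A 0 3*A 1 0*A 2 1*A 3 4*A 4 2 + A 0 3*A 1 0*A 2 2*A 3 1*A 4 4 - A 0 3*A 1 0*A 2 2*A 3 4*A 4 1 - A 0 3*A 1 0*A 2 4*A 3 1*A 4 2 + A 0 3*A 1 0*A 2 4*A 3 2*A 4 1 + A 0 3*A 1 1*A 2 0*A 3 2*A 4 4 - A 0 3*A 1 1*A 2 0*A 3 4*A 4 2 - A 0 3*A 1 1*A 2 2*A 3 0*A 4 4 + A 0 3*A 1 1*A 2 2*A 3 4*A 4 0 + A 0 3*A 1 1*A 2 4*A 3 0*A 4 2 - A 0 3*A 1 1*A 2 4*A 3 2*A 4 0 - A 0 3*A 1 2*A 2 0*A 3 1*A 4 4 + A 0 3*A 1 2*A 2 0*A 3 4*A 4 1 + A 0 3*A 1 2*A 2 1*A 3 0*A 4 4 - A 0 3*A 1 2*A 2 1*A 3 4*A 4 0 - A 0 3*A 1 2*A 2 4*A 3 0*A 4 1 + A 0 3*A 1 2*A 2 4*A 3 1*A 4 0 + A 0 3*A 1 4*A 2 0*A 3 1*A 4 2 - A 0 3*A 1 4*A 2 0*A 3 2*A 4 1 - A 0 3*A 1 4*A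 2 1*A 3 0*A 4 2 + A 0 3*A 1 4*A 2 1*A 3 2*A 4 0 + A 0 3*A 1 4*A 2 2*A 3 0*A 4 1 - A 0 3*A 1 4*A 2 2*A 3 1*A 4 0 + A 0 4*A 1 0*A 2 1*A 3 2*A 4 3 - A 0 4*A 1 0*A 2 1*A 3 3*A 4 2 - A 0 4*A 1 0*A 2 2*A 3 1*A 4 3 + A 0 4*A 1 0*A 2 2*A 3 3*A 4 1 + A 0 4*A 1 0*A 2 3*A 3 1*A 4 2 - A 0 4*A 1 0*A 2 3*A 3 2*A 4 1 - A 0 4*A 1 1*A 2 0*A 3 2*A 4 3 + A 0 4*A 1 1*A 2 0*A 3 3*A 4 2 + A 0 4*A 1 1*A 2 2*A 3 0*A 4 3 - A 0 4*A 1 1*A 2 2*A 3 3*A 4 0 - A 0 4*A 1 1*A 2 3*A 3 0*A 4 2 + A 0 4*A 1 1*A 2 3*A 3 2*A 4 0 + A 0 4*A 1 2*A 2 0*A 3 1*A 4 3 - A 0 4*A 1 2*A 2 0*A 3 3*A 4 1 - A 0 4*A 1 2*A 2 1*A 3 0*A 4 3 + A 0 4*A 1 2*A 2 1*A 3 3*A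 4 0 + A 0 4*A 1 2*A 2 3*A 3 0*A 4 1 - A 0 4*A 1 2*A 2 3*A 3 1*A 4 0 - A 0 4*A 1 3*A 2 0*A 3 1*A 4 2 + A 0 4*A 1 3*A 2 0*A 3 2*A 4 1 + A 0 4*A 1 3*A 2 1*A 3 0*A 4 2 - A 0 4*A 1 3*A 2 1*A 3 2*A 4 0 - A 0 4*A 1 3*A 2 2*A 3 0*A 4 1 + A 0 4*A 1 3*A 2 2*A 3 1*A 4 0 := by
  rw [Matrix.det_succ_row_zero]
  simp [Fin.sum_univ_succ, det_fin_four, Matrix.submatrix_apply, Fin.zero_succAbove,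
    Fin.succ_succAbove_zero, Fin.succ_succAbove_one, show (Fin.succ (2:Fin 3) : Fin 4) = 3 by decide, show ((2:Fin 3).succ.succ : Fin 5) = 4 by decide, show ((Fin.succ (2:Fin 3)).succ.succAbove (0:Fin 4) : Fin 5) = 0 by decide, show ((Fin.succ (2:Fin 3)).succ.succAbove (1:Fin 4) : Fin 5) = 1 by decide, show ((Fin.succ (2:Fin 3)).succ.succAbove (2:Fin 4) : Fin 5) = 2 by decide, show ((Fin.succ (2:Fin 3)).succ.succAbove (3:Fin 4) : Fin 5) = 3 by decide, show Fin.succ (3:Fin 4) = 4 by decide, show Fin.succ (2:Fin 4) = 3 by decide, show Fin.castSucc (3:Fin 4) = 3 by decide, show Fin.castSucc (2:Fin 4) = 2 by decide, show Fin.succAbove (1:Fin 5) (0:Fin 4) = 0 by decide, show Fin.succAbove (1:Fin 5) (1:Fin 4) = 2 by decide, show Fin.succAbove (1:Fin 5) (2:Fin 4) = 3 by decide, show Fin.succAbove (1:Fin 5) (3:Fin 4) = 4 by decide, show Fin.succAbove (2:Fin 5) (0:Fin 4) = 0 by decide, show Fin.succAbove (2:Fin 5) (1:Fin 4) = 1 by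 decide, show Fin.succAbove (2:Fin 5) (2:Fin 4) = 3 by decide, show Fin.succAbove (2:Fin 5) (3:Fin 4) = 4 by decide, show Fin.succAbove (3:Fin 5) (0:Fin 4) = 0 by decide, show Fin.succAbove (3:Fin 5) (1:Fin 4) = 1 by decide, show Fin.succAbove (3:Fin 5) (2:Fin 4) = 2 by decide, show Fin.succAbove (3:Fin 5) (3:Fin 4) = 4 by decide, show Fin.succAbove (4:Fin 5) (0:Fin 4) = 0 by decide, show Fin.succAbove (4:Fin 5) (1:Fin 4) = 1 by decide, show Fin.succAbove (4:Fin 5) (2:Fin 4) = 2 by decide, show Fin.succAbove (4:Fin 5) (3:Fin 4) = 3 by decide]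
  ring

/-! ### Evaluating the Wronskians -/

lemma w0 (x : ℝ) : wronskian18 0 x = x^4 := by
  unfold wronskian18
  have h : (fun j l : Fin ((0:Fin 5).val + 1) => deriv^[j.val] (fam18 (Fin.castLE (0:Fin 5).isLt l)) x)
      = !![x^4] := by
    funext j l
    fin_cases j <;> fin_cases l <;> rfl
  rw [h]
  simp [Matrix.det_fin_one]

lemma w1 (x : ℝ) : wronskian18 1 x = -(4*x^3) := by
  unfold wronskian18
  have h : (fun j l : Fin ((1:Fin 5).val + 1) => deriv^[j.val] (fam18 (Fin.castLE (1:Fin 5).isLt l)) x)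
      = !![x^4, 1; pp 0 0 0 4 0 0 x, 0] := by
    funext j l
    fin_cases j <;> fin_cases l
    · rfl
    · rfl
    · exact congrFun c01 x
    · exact congrFun c11 x
  rw [h, Matrix.det_fin_two]
  norm_num [pp]

lemma w2 (x : ℝ) : wronskian18 2 x = 16*x^3 := by
  unfold wronskian18
  have h : (fun j l : Fin ((2:Fin 5).val + 1) => deriv^[j.val] (fam18 (Fin.castLE (2:Fin 5).isLt l)) x)
      = !![x^4, 1, x^2;
          pp 0 0 0 4 0 0 x, 0, pp 0 2 0 0 0 0 x;
          pp 0 0 12 0 0 0 x, 0, pp 2 0 0 0 0 0 x] := by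
    funext j l
    fin_cases j <;> fin_cases l
    · rfl
    · rfl
    · rfl
    · exact congrFun c01 x
    · exact congrFun c11 x
    · exact congrFun c21 x
    · exact congrFun c02 x
    · exact congrFun c12 x
    · exact congrFun c22 x
  rw [h, Matrix.det_fin_three]
  norm_num [pp, Matrix.vecHead, Matrix.vecTail, Matrix.cons_val_two]
  ring

lemma w3 (x : ℝ) : wronskian18 3 x = 48*x - 144*x^3 + 480*x^5 := by
  unfold wronskian18
  have h : (fun j l : Fin ((3:Fin 5).val + 1) => deriv^[j.val] (fam18 (Fin.castLE (3:Fin 5).isLt l)) x)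
      = !![x^4, 1, x^2, (1 + x ^ 2) * (x + 2 * x ^ 3);
          pp 0 0 0 4 0 0 x, 0, pp 0 2 0 0 0 0 x, pp 1 0 9 0 10 0 x;
          pp 0 0 12 0 0 0 x, 0, pp 2 0 0 0 0 0 x, pp 0 18 0 40 0 0 x;
          pp 0 24 0 0 0 0 x, 0, pp 0 0 0 0 0 0 x, pp 18 0 120 0 0 0 x] := by
    funext j l
    fin_cases j <;> fin_cases l
    · rfl
    · rfl
    · rfl
    · rfl
    · exact congrFun c01 x
    · exact congrFun c11 x
    · exact congrFun c21 x
    · exact congrFun c31 x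
    · exact congrFun c02 x
    · exact congrFun c12 x
    · exact congrFun c22 x
    · exact congrFun c32 x
    · exact congrFun c03 x
    · exact congrFun c13 x
    · exact congrFun c23 x
    · exact congrFun c33 x
  rw [h, det_fin_four]
  norm_num [pp, Matrix.of_apply, Matrix.cons_val', Matrix.cons_val_zero, Matrix.cons_val_one, Matrix.head_cons, Matrix.cons_val_two, Matrix.cons_val_three, Matrix.cons_val_four, Matrix.vecHead, Matrix.vecTail, Matrix.empty_val', Matrix.cons_val_fin_one, Matrix.head_fin_const]
  ring

set_option maxHeartbeats 1600000 in
lemma w4 (x : ℝ) : wronskian18 4 x = 1536 * x ^ 3 * (2 * x ^ 2 + 9) / (x ^ 2 + 1) ^ 3 := by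
  unfold wronskian18
  have h : (fun j l : Fin ((4:Fin 5).val + 1) => deriv^[j.val] (fam18 (Fin.castLE (4:Fin 5).isLt l)) x)
      = !![x^4, 1, x^2, (1 + x ^ 2) * (x + 2 * x ^ 3), (1 + x ^ 2) * (x + 2 * x ^ 3) * arctan x;
          pp 0 0 0 4 0 0 x, 0, pp 0 2 0 0 0 0 x, pp 1 0 9 0 10 0 x, G1 x;
          pp 0 0 12 0 0 0 x, 0, pp 2 0 0 0 0 0 x, pp 0 18 0 40 0 0 x, G2 x;
          pp 0 24 0 0 0 0 x, 0, pp 0 0 0 0 0 0 x, pp 18 0 120 0 0 0 x, G3 x;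
          pp 24 0 0 0 0 0 x, 0, pp 0 0 0 0 0 0 x, pp 0 240 0 0 0 0 x, G4 x] := by
    funext j l
    fin_cases j <;> fin_cases l
    · rfl
    · rfl
    · rfl
    · rfl
    · rfl
    · exact congrFun c01 x
    · exact congrFun c11 x
    · exact congrFun c21 x
    · exact congrFun c31 x
    · exact congrFun c41 x
    · exact congrFun c02 x
    · exact congrFun c12 x
    · exact congrFun c22 x
    · exact congrFun c32 x
    · exact congrFun c42 x
    · exact congrFun c03 x
    · exact congrFun c13 x
    · exact congrFun c23 x
    · exact congrFun c33 x
    · exact congrFun c43 x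
    · exact congrFun c04 x
    · exact congrFun c14 x
    · exact congrFun c24 x
    · exact congrFun c34 x
    · exact congrFun c44 x
  rw [h]
  have h0 : (1:ℝ)+x^2 ≠ 0 := by positivity
  have h1 : (x:ℝ)^2+1 ≠ 0 := by positivity
  rw [det_fin_five]
  norm_num [G1, G2, G3, G4, pp, iv, Matrix.of_apply, Matrix.cons_val', Matrix.cons_val_zero, Matrix.cons_val_one, Matrix.head_cons, Matrix.cons_val_two, Matrix.cons_val_three, Matrix.cons_val_four, Matrix.vecHead, Matrix.vecTail, Matrix.empty_val', Matrix.cons_val_fin_one, Matrix.head_fin_const]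
  field_simp
  ring

theorem stmt_18 :
    (∀ i : Fin 5, ∀ x : ℝ, 0 < x → wronskian18 i x ≠ 0) ∧
    ∀ x : ℝ, 0 < x →
      wronskian18 4 x = 1536 * x ^ 3 * (2 * x ^ 2 + 9) / (x ^ 2 + 1) ^ 3 ∧
      0 < wronskian18 4 x := by
  constructor
  · intro i x hx
    fin_cases i
    · show wronskian18 0 x ≠ 0
      rw [w0]; positivity
    · show wronskian18 1 x ≠ 0
      rw [w1]
      have : (0:ℝ) < 4*x^3 := by positivity
      intro hc; nlinarith
    · show wronskian18 2 x ≠ 0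
      rw [w2]; positivity
    · show wronskian18 3 x ≠ 0
      rw [w3]
      have h := mul_nonneg hx.le (sq_nonneg (40*x^2 - 6))
      intro hc; nlinarith
    · show wronskian18 4 x ≠ 0
      rw [w4]; positivity
  · intro x hx
    refine ⟨w4 x, ?_⟩
    rw [w4]
    positivity
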